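/- Let R be a principal ideal domain, c,d ∈ ℤ, and let A be a nonzero ℤ-graded R-module with (c,d)-graded Frobenius data (μ,η,ν,ε) satisfying the signed relations (i)–(v). Then the unit is injective and the counit is surjective: the R-linear map R → A_{−c}, r ↦ r·η(1), is injective, and the R-linear map ε : A_d → R is surjective; in particular A_{−c} ≠ 0 and A_d ≠ 0, so A contains a free summand of rank one in degree −c and a free summand of rank one in degree d. -/

import Mathlib

/-! # A framework for ℤ-graded modules with Koszul sign conventions -/

noncomputable section
open scoped TensorProduct DirectSum

/-- The sign `(−1)^z` for an integer `z` (depends only on the parity of `z`),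
as an element of the ring `R`. -/
def gsign (R : Type) [CommRing R] (z : ℤ) : R := (-1 : R) ^ z.natAbs

/-- A ℤ-graded `R`-module: a family of `R`-modules indexed by `ℤ`. -/
structure GradedModule (R : Type) [CommRing R] where
  piece : ℤ → Type
  [acg : ∀ i, AddCommGroup (piece i)]
  [mod : ∀ i, Module R (piece i)]

attribute [instance 2000] GradedModule.acg GradedModule.mod

variable {R : Type} [CommRing R]

/-- Transport along an equality of degrees. -/
def GradedModule.pcast (A : GradedModule R) {i j : ℤ} (h : i = j) :
    A.piece i →ₗ[R] A.piece j where
  toFun a := h ▸ a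
  map_add' a b := by subst h; rfl
  map_smul' r a := by subst h; rfl

/-- The tensor product of graded modules: `(A ⊗ B)_k = ⊕_{p+q=k} A_p ⊗ B_q`. -/
def GradedModule.tensor (A B : GradedModule R) : GradedModule R where
  piece k := ⨁ p : ℤ, (A.piece p ⊗[R] B.piece (k - p))

/-- The unit object: `R` concentrated in degree `0`. -/
def gUnit (R : Type) [CommRing R] : GradedModule R where
  piece k := ↥(if k = 0 then (⊤ : Submodule R R) else ⊥)

/-- A graded map of degree `deg`: a family of `R`-linear maps `A_i → B_{i+deg}`. -/
structure GMap (A B : GradedModule R) where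
  deg : ℤ
  app : ∀ i, A.piece i →ₗ[R] B.piece (i + deg)

namespace GMap

/-- The identity graded map (degree `0`). -/
protected def id (A : GradedModule R) : GMap A A :=
  ⟨0, fun i => A.pcast (by ring)⟩

/-- Composition of graded maps (maps act from the left; `g.comp f = g ∘ f`). -/
def comp {A B C : GradedModule R} (g : GMap B C) (f : GMap A B) : GMap A C :=
  ⟨f.deg + g.deg, fun i =>
    (C.pcast (by ring)).comp ((g.app (i + f.deg)).comp (f.app i))⟩

/-- Scalar multiplication of a graded map. -/
instance {A B : GradedModule R} : SMul R (GMap A B) :=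
  ⟨fun r f => ⟨f.deg, fun i => r • f.app i⟩⟩

/-- Re-present a graded map with an equal degree expression. -/
def reindex {A B : GradedModule R} (f : GMap A B) (n : ℤ) (h : f.deg = n) : GMap A B :=
  ⟨n, fun i => (B.pcast (by rw [h])).comp (f.app i)⟩

/-- The Koszul-signed tensor product of graded maps:
`(f ⊗ g)(a ⊗ b) = (−1)^{|g|·|a|} f(a) ⊗ g(b)`. -/
def tmul {A A' B B' : GradedModule R} (f : GMap A A') (g : GMap B B') :
    GMap (A.tensor B) (A'.tensor B') :=
  ⟨f.deg + g.deg, fun k =>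
    DirectSum.toModule R ℤ _ fun p =>
      (DirectSum.lof R ℤ
          (fun q => A'.piece q ⊗[R] B'.piece (k + (f.deg + g.deg) - q)) (p + f.deg)).comp
        (gsign R (g.deg * p) •
          (TensorProduct.map (f.app p)
            ((B'.pcast (show (k - p) + g.deg = k + (f.deg + g.deg) - (p + f.deg) by ring)).comp
              (g.app (k - p)))))⟩

end GMap

/-- The Koszul twist `τ : A ⊗ B → B ⊗ A`, `τ(a ⊗ b) = (−1)^{|a||b|} b ⊗ a`. -/
def twistG (A B : GradedModule R) : GMap (A.tensor B) (B.tensor A) :=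
  ⟨0, fun k =>
    DirectSum.toModule R ℤ _ fun p =>
      (DirectSum.lof R ℤ (fun q => B.piece q ⊗[R] A.piece (k + 0 - q)) (k - p)).comp
        (gsign R (p * (k - p)) •
          ((LinearMap.lTensor (B.piece (k - p)) (A.pcast (show p = k + 0 - (k - p) by ring))).comp
            (TensorProduct.comm R (A.piece p) (B.piece (k - p))).toLinearMap))⟩

/-- The associator `(A ⊗ B) ⊗ C → A ⊗ (B ⊗ C)` (no signs). -/
def assocG (A B C : GradedModule R) :
    GMap ((A.tensor B).tensor C) (A.tensor (B.tensor C)) :=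
  ⟨0, fun k =>
    DirectSum.toModule R ℤ _ fun p =>
      (DirectSum.toModule R ℤ _ fun q =>
        (DirectSum.lof R ℤ (fun q' => A.piece q' ⊗[R] (B.tensor C).piece (k + 0 - q')) q).comp
          ((LinearMap.lTensor (A.piece q)
            ((DirectSum.lof R ℤ (fun s => B.piece s ⊗[R] C.piece ((k + 0 - q) - s)) (p - q)).comp
              (LinearMap.lTensor (B.piece (p - q))
                (C.pcast (show k - p = (k + 0 - q) - (p - q) by ring))))).comp
            (TensorProduct.assoc R (A.piece q) (B.piece (p - q)) (C.piece (k - p))).toLinearMap)).comp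
        (TensorProduct.directSumLeft R R (fun q => A.piece q ⊗[R] B.piece (p - q))
          (C.piece (k - p))).toLinearMap⟩

/-- The inverse associator `A ⊗ (B ⊗ C) → (A ⊗ B) ⊗ C` (no signs). -/
def assocInvG (A B C : GradedModule R) :
    GMap (A.tensor (B.tensor C)) ((A.tensor B).tensor C) :=
  ⟨0, fun k =>
    DirectSum.toModule R ℤ _ fun p =>
      (DirectSum.toModule R ℤ _ fun s =>
        (DirectSum.lof R ℤ
            (fun q' => (A.tensor B).piece q' ⊗[R] C.piece (k + 0 - q')) (p + s)).comp
          ((TensorProduct.map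
              ((DirectSum.lof R ℤ (fun q => A.piece q ⊗[R] B.piece ((p + s) - q)) p).comp
                (LinearMap.lTensor (A.piece p) (B.pcast (show s = (p + s) - p by ring))))
              (C.pcast (show (k - p) - s = k + 0 - (p + s) by ring))).comp
            (TensorProduct.assoc R (A.piece p) (B.piece s)
              (C.piece ((k - p) - s))).symm.toLinearMap)).comp
        (TensorProduct.directSumRight R R (A.piece p)
          (fun s => B.piece s ⊗[R] C.piece ((k - p) - s))).toLinearMap⟩

/-- The left unitor `𝟙 ⊗ A → A`. -/
def lunitor (A : GradedModule R) : GMap ((gUnit R).tensor A) A :=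
  ⟨0, fun k =>
    DirectSum.toModule R ℤ _ fun p =>
      if h : p = 0 then
        TensorProduct.lift
          ((LinearMap.toSpanSingleton R (A.piece (k - p) →ₗ[R] A.piece (k + 0))
              (A.pcast (by omega))).comp
            (Submodule.subtype (if p = 0 then (⊤ : Submodule R R) else ⊥)))
      else 0⟩

/-- The right unitor `A ⊗ 𝟙 → A`. -/
def runitor (A : GradedModule R) : GMap (A.tensor (gUnit R)) A :=
  ⟨0, fun k =>
    DirectSum.toModule R ℤ _ fun p =>
      if h : k - p = 0 then
        TensorProduct.lift
          (((LinearMap.toSpanSingleton R (A.piece p →ₗ[R] A.piece (k + 0))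
              (A.pcast (by omega))).comp
            (Submodule.subtype (if k - p = 0 then (⊤ : Submodule R R) else ⊥))).flip)
      else 0⟩

/-- The inverse left unitor `A → 𝟙 ⊗ A`. -/
def lunitorInv (A : GradedModule R) : GMap A ((gUnit R).tensor A) :=
  ⟨0, fun k =>
    (DirectSum.lof R ℤ (fun p => (gUnit R).piece p ⊗[R] A.piece (k + 0 - p)) 0).comp
      (((TensorProduct.mk R ((gUnit R).piece 0) (A.piece (k + 0 - 0))) ⟨1, by simp⟩).comp
        (A.pcast (by ring)))⟩

/-- The inverse right unitor `A → A ⊗ 𝟙`. -/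
def runitorInv (A : GradedModule R) : GMap A (A.tensor (gUnit R)) :=
  ⟨0, fun k =>
    (DirectSum.lof R ℤ (fun p => A.piece p ⊗[R] (gUnit R).piece (k + 0 - p)) k).comp
      ((TensorProduct.mk R (A.piece k) ((gUnit R).piece (k + 0 - k))).flip
        ⟨1, by simp⟩)⟩


/-- The underlying element of `R` of an element of a piece of the unit object. -/
def unitVal {R : Type} [CommRing R] (k : ℤ) : (gUnit R).piece k →ₗ[R] R :=
  Submodule.subtype _
section FrobeniusRelations

variable {R : Type} [CommRing R]

/-- (i) graded associativity: `μ∘(μ⊗id) = (−1)^c μ∘(id⊗μ)` (under the associator). -/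
def relAssoc (c : ℤ) {A : GradedModule R} (μ : GMap (A.tensor A) A) : Prop :=
  μ.comp (μ.tmul (GMap.id A)) =
    gsign R c • ((μ.comp ((GMap.id A).tmul μ)).comp (assocG A A A))

/-- (ii) graded unitality: `(−1)^c μ∘(η⊗id) = (−1)^{c(c−1)/2} id = μ∘(id⊗η)`
(under the unitors). -/
def relUnit (c : ℤ) {A : GradedModule R} (μ : GMap (A.tensor A) A)
    (η : GMap (gUnit R) A) : Prop :=
  gsign R c • ((μ.comp (η.tmul (GMap.id A))).comp (lunitorInv A)) =
      gsign R (c * (c - 1) / 2) • GMap.id A ∧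
  (μ.comp ((GMap.id A).tmul η)).comp (runitorInv A) =
      gsign R (c * (c - 1) / 2) • GMap.id A

/-- (iii) graded coassociativity: `(id⊗ν)∘ν = (−1)^d (ν⊗id)∘ν` (under the associator). -/
def relCoassoc (d : ℤ) {A : GradedModule R} (ν : GMap A (A.tensor A)) : Prop :=
  ((GMap.id A).tmul ν).comp ν =
    gsign R d • ((assocG A A A).comp ((ν.tmul (GMap.id A)).comp ν))

/-- (iv) graded counitality: `(−1)^d (id⊗ε)∘ν = (−1)^{d(d−1)/2} id = (ε⊗id)∘ν`
(under the unitors). -/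
def relCounit (d : ℤ) {A : GradedModule R} (ν : GMap A (A.tensor A))
    (ε : GMap A (gUnit R)) : Prop :=
  gsign R d • ((runitor A).comp (((GMap.id A).tmul ε).comp ν)) =
      gsign R (d * (d - 1) / 2) • GMap.id A ∧
  (lunitor A).comp ((ε.tmul (GMap.id A)).comp ν) =
      gsign R (d * (d - 1) / 2) • GMap.id A

/-- (v) graded Frobenius relation:
`(μ⊗id)∘(id⊗ν) = (−1)^{cd} ν∘μ = (id⊗μ)∘(ν⊗id)` (under the associators). -/
def relFrob (c d : ℤ) {A : GradedModule R} (μ : GMap (A.tensor A) A)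
    (ν : GMap A (A.tensor A)) : Prop :=
  (μ.tmul (GMap.id A)).comp ((assocInvG A A A).comp ((GMap.id A).tmul ν)) =
      gsign R (c * d) • (ν.comp μ) ∧
  ((GMap.id A).tmul μ).comp ((assocG A A A).comp (ν.tmul (GMap.id A))) =
      gsign R (c * d) • (ν.comp μ)

/-- (vi) graded commutativity: `μ∘τ = (−1)^c μ`. -/
def relComm (c : ℤ) {A : GradedModule R} (μ : GMap (A.tensor A) A) : Prop :=
  μ.comp (twistG A A) = gsign R c • μ

/-- (vi') graded symmetry: `ε∘μ∘τ = (−1)^c ε∘μ`. -/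
def relSymm (c : ℤ) {A : GradedModule R} (μ : GMap (A.tensor A) A)
    (ε : GMap A (gUnit R)) : Prop :=
  (ε.comp μ).comp (twistG A A) = gsign R c • (ε.comp μ)

/-- Unsigned unitality `μ∘(η⊗id) = id = μ∘(id⊗η)` (under the unitors). -/
def relUnit₀ {A : GradedModule R} (μ : GMap (A.tensor A) A)
    (η : GMap (gUnit R) A) : Prop :=
  (μ.comp (η.tmul (GMap.id A))).comp (lunitorInv A) = GMap.id A ∧
  (μ.comp ((GMap.id A).tmul η)).comp (runitorInv A) = GMap.id A

/-- Unsigned counitality `(id⊗ε)∘ν = id = (ε⊗id)∘ν` (under the unitors). -/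
def relCounit₀ {A : GradedModule R} (ν : GMap A (A.tensor A))
    (ε : GMap A (gUnit R)) : Prop :=
  (runitor A).comp (((GMap.id A).tmul ε).comp ν) = GMap.id A ∧
  (lunitor A).comp ((ε.tmul (GMap.id A)).comp ν) = GMap.id A

/-- Unsigned Frobenius relation `(μ⊗id)∘(id⊗ν) = ν∘μ = (id⊗μ)∘(ν⊗id)`
(under the associators). -/
def relFrob₀ {A : GradedModule R} (μ : GMap (A.tensor A) A)
    (ν : GMap A (A.tensor A)) : Prop :=
  (μ.tmul (GMap.id A)).comp ((assocInvG A A A).comp ((GMap.id A).tmul ν)) = ν.comp μ ∧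
  ((GMap.id A).tmul μ).comp ((assocG A A A).comp (ν.tmul (GMap.id A))) = ν.comp μ

/-- The zig-zag (duality) identities for a pairing `p : A⊗A → 𝟙` and a
copairing `q : 𝟙 → A⊗A`:
`(p⊗id)∘(id⊗q) = id = (id⊗p)∘(q⊗id)` (under the associators and unitors). -/
def relZigZag {A : GradedModule R} (p : GMap (A.tensor A) (gUnit R))
    (q : GMap (gUnit R) (A.tensor A)) : Prop :=
  (lunitor A).comp ((p.tmul (GMap.id A)).comp ((assocInvG A A A).comp
      (((GMap.id A).tmul q).comp (runitorInv A)))) = GMap.id A ∧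
  (runitor A).comp (((GMap.id A).tmul p).comp ((assocG A A A).comp
      ((q.tmul (GMap.id A)).comp (lunitorInv A)))) = GMap.id A

end FrobeniusRelations

section Helpers

variable {R : Type} [CommRing R]

@[simp] lemma pcast_rfl (A : GradedModule R) {i : ℤ} (a : A.piece i) :
    A.pcast rfl a = a := rfl

lemma pcast_pcast (A : GradedModule R) {i j k : ℤ} (h : i = j) (h' : j = k)
    (a : A.piece i) : A.pcast h' (A.pcast h a) = A.pcast (h.trans h') a := by
  subst h h'; rfl

lemma pcast_irrel (A : GradedModule R) {i j : ℤ} (h h' : i = j) (a : A.piece i) :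
    A.pcast h a = A.pcast h' a := rfl

lemma pcast_inj (A : GradedModule R) {i j : ℤ} (h : i = j) {a b : A.piece i}
    (hab : A.pcast h a = A.pcast h b) : a = b := by subst h; exact hab

lemma app_pcast {A B : GradedModule R} (f : GMap A B) {i j : ℤ} (h : i = j)
    (a : A.piece i) :
    f.app j (A.pcast h a) = B.pcast (by rw [h]) (f.app i a) := by
  subst h; rfl

lemma unitVal_pcast {i j : ℤ} (h : i = j) (u : (gUnit R).piece i) :
    unitVal j ((gUnit R).pcast h u) = unitVal i u := by subst h; rfl

lemma unitVal_eps_pcast {A : GradedModule R} (ε : GMap A (gUnit R)) {i j : ℤ}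
    (h : i = j) (z : A.piece i) :
    unitVal (j + ε.deg) (ε.app j (A.pcast h z)) = unitVal (i + ε.deg) (ε.app i z) := by
  subst h; rfl

lemma unitVal_eps_pcast3 {A : GradedModule R} (ε : GMap A (gUnit R)) {i j k l : ℤ}
    (h1 : i = j) (h2 : j = k) (h3 : k = l) (z : A.piece i) :
    unitVal (l + ε.deg) (ε.app l (A.pcast h3 (A.pcast h2 (A.pcast h1 z)))) =
      unitVal (i + ε.deg) (ε.app i z) := by
  subst h1 h2 h3; rfl

lemma gmap_ext_point {A B : GradedModule R} {F G : GMap A B} (h : F = G)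
    (i : ℤ) (a : A.piece i) :
    B.pcast (by rw [h]) (F.app i a) = G.app i a := by
  subst h; rfl

lemma GMap.comp_app {A B C : GradedModule R} (g : GMap B C) (f : GMap A B)
    (i : ℤ) (a : A.piece i) :
    (g.comp f).app i a =
      C.pcast (by simp only [GMap.comp]; ring) (g.app (i + f.deg) (f.app i a)) := rfl

lemma GMap.smul_app' {A B : GradedModule R} (r : R) (f : GMap A B) (i : ℤ)
    (a : A.piece i) : (r • f).app i a = r • f.app i a := rfl

lemma GMap.id_app' (A : GradedModule R) (i : ℤ) (a : A.piece i) :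
    (GMap.id A).app i a = A.pcast (by simp only [GMap.id]; ring) a := rfl

lemma eta_one_pcast {A : GradedModule R} (η : GMap (gUnit R) A) {j : ℤ}
    (h : (0:ℤ) = j) (m : (1:R) ∈ (if j = 0 then (⊤ : Submodule R R) else ⊥)) :
    η.app j (⟨1, m⟩ : (gUnit R).piece j) =
      A.pcast (by rw [← h]) (η.app 0 ⟨1, by simp⟩) := by
  subst h; rfl

lemma gsign_mul_self (z : ℤ) : gsign R z * gsign R z = 1 := by
  unfold gsign
  rw [← pow_add]
  exact Even.neg_one_pow ⟨_, rfl⟩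

lemma gsign_sq (z : ℤ) : gsign R z ^ 2 = 1 := by
  rw [sq]; exact gsign_mul_self z

lemma smul_gsign_cancel (z : ℤ) {M : Type*} [AddCommGroup M] [Module R M]
    (a : M) : gsign R z • gsign R z • a = a := by
  rw [smul_smul, gsign_mul_self, one_smul]

section MainHelpers

variable {R : Type} [CommRing R]

/-- From graded counitality, every homogeneous element is divisible by `t` whenever
all counit values are divisible by `t`. -/
lemma counit_divides {A : GradedModule R} (ν : GMap A (A.tensor A))
    (ε : GMap A (gUnit R)) (d : ℤ) (hν : ν.deg = d) (hε : ε.deg = -d)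
    (hcu : (lunitor A).comp ((ε.tmul (GMap.id A)).comp ν) =
      gsign R (d * (d - 1) / 2) • GMap.id A)
    (t : R)
    (ht : ∀ x : A.piece d, ∃ r : R, unitVal (d + ε.deg) (ε.app d x) = r * t) :
    ∀ (i : ℤ) (a : A.piece i), ∃ b : A.piece i, a = t • b := by
  intro i a
  -- divisibility of the composite (lunitor ∘ (ε ⊗ id)) on the tensor piece
  have hdiv : ∀ (k : ℤ) (x : (A.tensor A).piece k),
      ∃ b, (lunitor A).app (k + (ε.tmul (GMap.id A)).deg)
        ((ε.tmul (GMap.id A)).app k x) = t • b := by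
    intro k x
    induction x using DirectSum.induction_on with
    | zero => exact ⟨0, by erw [map_zero]; exact (smul_zero t).symm⟩
    | add x y hx hy =>
      obtain ⟨b₁, hb₁⟩ := hx; obtain ⟨b₂, hb₂⟩ := hy
      exact ⟨b₁ + b₂, by erw [map_add, map_add, hb₁, hb₂, smul_add]⟩
    | of p w =>
      rw [← DirectSum.lof_eq_of R]
      induction w using TensorProduct.induction_on with
      | zero => exact ⟨0, by erw [map_zero, map_zero, smul_zero]⟩
      | add x y hx hy =>
        obtain ⟨b₁, hb₁⟩ := hx; obtain ⟨b₂, hb₂⟩ := hy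
        exact ⟨b₁ + b₂, by
          rw [map_add]
          erw [map_add ((ε.tmul (GMap.id A)).app k), map_add ((lunitor A).app _), hb₁, hb₂, smul_add]⟩
      | tmul x₀ y₀ =>
        simp only [GMap.tmul, DirectSum.toModule_lof, LinearMap.coe_comp,
          Function.comp_apply, LinearMap.smul_apply, TensorProduct.map_tmul,
          lunitor, GMap.id]
        erw [DirectSum.toModule_lof]
        simp only [LinearMap.comp_apply, LinearMap.smul_apply, TensorProduct.map_tmul,
          zero_mul, gsign, Int.natAbs_zero, pow_zero, one_smul]
        erw [DirectSum.toModule_lof]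
        by_cases hp : p + ε.deg = 0
        · rw [dif_pos hp]
          obtain rfl : p = d := by omega
          obtain ⟨r, hr⟩ := ht x₀
          refine ⟨r • A.pcast (show k + (ε.deg + 0) - (p + ε.deg) = k + (ε.deg + 0) + 0 by omega)
            (A.pcast (show (k - p) + 0 = k + (ε.deg + 0) - (p + ε.deg) by omega)
              (A.pcast (show k - p = (k - p) + 0 by omega) y₀)), ?_⟩
          erw [smul_smul, mul_comm t r, ← hr]
          rfl
        · rw [dif_neg hp]
          exact ⟨0, by simp; exact (smul_zero _).symm⟩
  obtain ⟨b, hb⟩ := hdiv (i + ν.deg) (ν.app i a)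
  have hpt := gmap_ext_point hcu i a
  simp only [GMap.comp_app, GMap.smul_app', GMap.id_app'] at hpt
  rw [app_pcast (lunitor A)] at hpt
  rw [hb, map_smul, map_smul, map_smul] at hpt
  refine ⟨gsign R (d * (d - 1) / 2) • A.pcast
      (show i + ν.deg + (ε.tmul (GMap.id A)).deg + (lunitor A).deg = i by
        simp only [GMap.tmul, GMap.id, lunitor]; omega) b, ?_⟩
  apply pcast_inj A (show i = i + (GMap.id A).deg by simp only [GMap.id]; ring)
  have hpt' := congrArg (fun z => gsign R (d * (d - 1) / 2) • z) hpt
  simp only [smul_gsign_cancel] at hpt'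
  rw [← hpt']
  simp only [map_smul, pcast_pcast]
  exact smul_comm _ _ _

end MainHelpers

/-- Over a principal ideal domain, for a nonzero graded module with
`(c,d)`-graded Frobenius data satisfying the signed relations (i)–(v), the unit map
`R → A_{−c}`, `r ↦ r·η(1)`, is injective, and the counit `ε : A_d → R` is surjective;
in particular `A_{−c} ≠ 0` and `A_d ≠ 0`, and `A` contains a free summand of rank one
in degree `−c` (the unit map splits) and in degree `d` (the counit splits). -/
theorem graded_frobenius_unit_counit
    (R : Type) [CommRing R] [IsDomain R] [IsPrincipalIdealRing R]
    (c d : ℤ) (A : GradedModule R) (hA : ∃ i, Nontrivial (A.piece i))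
    (μ : GMap (A.tensor A) A) (η : GMap (gUnit R) A)
    (ν : GMap A (A.tensor A)) (ε : GMap A (gUnit R))
    (hμ : μ.deg = c) (hη : η.deg = -c) (hν : ν.deg = d) (hε : ε.deg = -d)
    (h₁ : relAssoc c μ) (h₂ : relUnit c μ η) (h₃ : relCoassoc d ν)
    (h₄ : relCounit d ν ε) (h₅ : relFrob c d μ ν) :
    Function.Injective (fun r : R => η.app 0 ⟨r, by simp⟩) ∧
    (∀ r : R, ∃ a : A.piece d, unitVal (d + ε.deg) (ε.app d a) = r) ∧
    Nontrivial (A.piece (0 + η.deg)) ∧ Nontrivial (A.piece d) ∧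
    (∃ g : A.piece (0 + η.deg) →ₗ[R] R, ∀ r : R, g (η.app 0 ⟨r, by simp⟩) = r) ∧
    (∃ s : R →ₗ[R] A.piece d, ∀ r : R,
        unitVal (d + ε.deg) (ε.app d (s r)) = r) := by
  classical
  set I : Ideal R := LinearMap.range ((unitVal (d + ε.deg)).comp (ε.app d)) with hI
  obtain ⟨t, ht⟩ := Submodule.IsPrincipal.principal I
  have hdvd : ∀ x : A.piece d, ∃ r : R, unitVal (d + ε.deg) (ε.app d x) = r * t := by
    intro x
    have hx : unitVal (d + ε.deg) (ε.app d x) ∈ I := ⟨x, rfl⟩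
    rw [ht, Submodule.mem_span_singleton] at hx
    obtain ⟨r, hr⟩ := hx
    exact ⟨r, by rw [← hr, smul_eq_mul]⟩
  have key := counit_divides ν ε d hν hε h₄.2 t hdvd
  have htne : t ≠ 0 := by
    rintro rfl
    obtain ⟨i₀, hi₀⟩ := hA
    obtain ⟨u, v, huv⟩ := hi₀
    obtain ⟨b, hb⟩ := key i₀ (u - v)
    rw [zero_smul, sub_eq_zero] at hb
    exact huv hb
  have htI : t ∈ I := by rw [ht]; exact Submodule.mem_span_singleton_self t
  obtain ⟨x, hx⟩ := htI
  obtain ⟨y, rfl⟩ := key d x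
  have hy : unitVal (d + ε.deg) (ε.app d y) = 1 := by
    simp only [LinearMap.comp_apply, map_smul, smul_eq_mul] at hx
    exact mul_left_cancel₀ htne (by rw [mul_one]; exact hx)
  -- the splitting of the counit
  have goal2 : ∀ r : R, ∃ a : A.piece d, unitVal (d + ε.deg) (ε.app d a) = r := by
    intro r
    exact ⟨r • y, by rw [map_smul, map_smul, smul_eq_mul, hy, mul_one]⟩
  have goal4 : Nontrivial (A.piece d) := by
    refine ⟨y, 0, fun h => ?_⟩
    rw [h, map_zero, map_zero] at hy
    exact one_ne_zero hy.symm
  have goal6 : ∃ s : R →ₗ[R] A.piece d, ∀ r : R,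
      unitVal (d + ε.deg) (ε.app d (s r)) = r := by
    refine ⟨LinearMap.toSpanSingleton R _ y, fun r => ?_⟩
    rw [LinearMap.toSpanSingleton_apply, map_smul, map_smul, smul_eq_mul, hy, mul_one]
  -- the unit side
  have hg : ∃ g : A.piece (0 + η.deg) →ₗ[R] R,
      ∀ r : R, g (η.app 0 ⟨r, by simp⟩) = r := by
    have hpt := gmap_ext_point h₂.2 d y
    simp only [GMap.comp_app, GMap.smul_app', GMap.id_app'] at hpt
    have h1 : (runitorInv A).app d y = DirectSum.lof R ℤ
        (fun p => A.piece p ⊗[R] (gUnit R).piece (d + 0 - p)) d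
        (y ⊗ₜ[R] ⟨1, by simp⟩) := rfl
    rw [h1] at hpt
    simp only [GMap.tmul] at hpt
    erw [DirectSum.toModule_lof] at hpt
    have hpt' : A.pcast _ (A.pcast _ (A.pcast _ (μ.app
        (d + (runitorInv A).deg + ((GMap.id A).deg + η.deg))
        (DirectSum.lof R ℤ (fun q => A.piece q ⊗[R] A.piece
            (d + (runitorInv A).deg + ((GMap.id A).deg + η.deg) - q))
          (d + (GMap.id A).deg)
          (gsign R (η.deg * d) • (((GMap.id A).app d y) ⊗ₜ[R]
            (A.pcast _ (η.app (d + (runitorInv A).deg - d) ⟨1, _⟩)))))))) =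
      gsign R (c * (c - 1) / 2) • A.pcast _ y := hpt
    clear hpt h1
    simp only [map_smul] at hpt'
    erw [map_smul (μ.app _)] at hpt'
    erw [eta_one_pcast η (show (0:ℤ) = d + (runitorInv A).deg - d by
      simp only [runitorInv]; ring)] at hpt'
    simp only [pcast_pcast] at hpt'
    have h3 := congrArg (fun z => unitVal _ (ε.app _ z)) hpt'
    simp only [map_smul, smul_eq_mul, app_pcast, unitVal_pcast, hy] at h3
    have h4 : gsign R (η.deg * d) * unitVal _ (ε.app _ (μ.app (d + (runitorInv A).deg + ((GMap.id A).deg + η.deg))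
        (DirectSum.lof R ℤ (fun q => A.piece q ⊗[R] A.piece ((d + (runitorInv A).deg + ((GMap.id A).deg + η.deg)) - q))
          (d + (GMap.id A).deg) (((GMap.id A).app d y) ⊗ₜ[R]
            A.pcast (show 0 + η.deg = (d + (runitorInv A).deg + ((GMap.id A).deg + η.deg)) - (d + (GMap.id A).deg) by
              simp only [runitorInv, GMap.id]; ring) (η.app 0 ⟨1, by simp⟩))))) =
        gsign R (c * (c - 1) / 2) * 1 := by
      refine Eq.trans ?_ h3
      congr 1
      exact (unitVal_eps_pcast3 ε _ _ _ _).symm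
    refine ⟨(gsign R (η.deg * d) * gsign R (c * (c - 1) / 2)) •
      LinearMap.comp (unitVal _) (LinearMap.comp (ε.app _)
        (LinearMap.comp (μ.app (d + (runitorInv A).deg + ((GMap.id A).deg + η.deg)))
          (LinearMap.comp (DirectSum.lof R ℤ (fun q => A.piece q ⊗[R] A.piece
              (d + (runitorInv A).deg + ((GMap.id A).deg + η.deg) - q))
              (d + (GMap.id A).deg))
            (LinearMap.comp (TensorProduct.mk R _ _ (((GMap.id A).app d) y))
              (A.pcast (show 0 + η.deg = d + (runitorInv A).deg +
                  ((GMap.id A).deg + η.deg) - (d + (GMap.id A).deg) by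
                simp only [runitorInv, GMap.id]; ring)))))), ?_⟩
    intro r
    have hr1 : (⟨r, by simp⟩ : (gUnit R).piece 0) =
        r • (⟨1, by simp⟩ : (gUnit R).piece 0) := Subtype.ext (by simp)
    erw [hr1, map_smul (η.app 0)]
    simp only [LinearMap.smul_apply, LinearMap.comp_apply, map_smul,
      TensorProduct.mk_apply, smul_eq_mul]
    show r * (_ * _ * unitVal _ (ε.app _ (μ.app _ (DirectSum.lof R ℤ _ _
      (((GMap.id A).app d y) ⊗ₜ[R] A.pcast _ (η.app 0 ⟨1, _⟩)))))) = r
    linear_combination (gsign R (c * (c - 1) / 2) * r) * h4 +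
      r * gsign_mul_self (R := R) (c * (c - 1) / 2)
  obtain ⟨g, hgr⟩ := hg
  have goal1 : Function.Injective (fun r : R => η.app 0 (⟨r, by simp⟩ :
      (gUnit R).piece 0)) := by
    intro r₁ r₂ h
    have := congrArg g h
    rwa [hgr, hgr] at this
  have goal3 : Nontrivial (A.piece (0 + η.deg)) := by
    refine ⟨η.app 0 ⟨1, by simp⟩, 0, fun h => ?_⟩
    have h1 := hgr 1
    rw [h, map_zero] at h1
    exact one_ne_zero h1.symm
  exact ⟨goal1, goal2, goal3, goal4, ⟨g, hgr⟩, goal6⟩
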